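/- Let (V,g) be a Lorentz vector space and F : V⁴ → ℝ a curvature-like map. If F(x,y,y,x) = 0 for every degenerate 2-plane span{x,y} in V, then there is a constant k with F(x,y,z,w) = k (g(x,z)g(y,w) - g(y,z)g(x,w)) for all x,y,z,w. -/

import Mathlib

open RealInnerProductSpace

private theorem lemA' {M : Type*} [AddCommGroup M] (T : M → M → M → M → ℝ)
    (add1 : ∀ a a' b c d, T (a + a') b c d = T a b c d + T a' b c d)
    (add2 : ∀ a b b' c d, T a (b + b') c d = T a b c d + T a b' c d)
    (halt : ∀ x y z w, T y x z w = -T x y z w)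
    (hpair : ∀ x y z w, T z w x y = T x y z w)
    (hbianchi : ∀ x y z w, T x y z w + T x z w y + T x w y z = 0)
    (hq : ∀ x y, T x y y x = 0) :
    ∀ x y z w, T x y z w = 0 := by
  have hlast : ∀ x y z w, T x y w z = -T x y z w := by
    intro x y z w
    rw [hpair w z x y, halt, hpair]
  have add3 : ∀ a b c c' d, T a b (c + c') d = T a b c d + T a b c' d := by
    intro a b c c' d
    rw [hpair (c + c') d a b, add1, hpair a b c d, hpair a b c' d]
  have add4 : ∀ a b c d d', T a b c (d + d') = T a b c d + T a b c d' := by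
    intro a b c d d'
    rw [hpair c (d + d') a b, add2, hpair a b c d, hpair a b c d']
  have h1 : ∀ x y z, T x y y z = 0 := by
    intro x y z
    have h := hq (x + z) y
    rw [add1, add4, add4] at h
    have e : T z y y x = T x y y z := by
      rw [hpair y x z y, halt x y z y, hlast x y y z, neg_neg]
    rw [hq, hq, e] at h
    linarith
  have h2 : ∀ x y z w, T x z y w = -T x y z w := by
    intro x y z w
    have h := h1 x (y + z) w
    rw [add2, add3, add3, h1, h1] at h
    linarith
  intro x y z w
  have hb := hbianchi x y z w
  have e1 : T x z w y = T x y z w := by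
    rw [hlast x z y w, h2 x y z w, neg_neg]
  have e2 : T x w y z = T x y z w := by
    rw [h2 x y w z, hlast x y z w, neg_neg]
  rw [e1, e2] at hb
  linarith

set_option maxHeartbeats 1600000 in
/-- Lemma 2.1, b ⇒ a: Let `F` be a curvature-like map on a
finite-dimensional Lorentz vector space (modeled as `ℝ × E` with Lorentz metric
`g((a,x),(b,y)) = -a*b + ⟪x,y⟫`).  If `F(x,y,y,x) = 0` for every degenerate 2-plane
`span{x,y}` (i.e. whenever `g(x,x)g(y,y) - g(x,y)² = 0`), then there is a constant `k`
with `F(x,y,z,w) = k (g(x,z)g(y,w) - g(y,z)g(x,w))` for all `x,y,z,w`. -/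
theorem curvature_like_vanishing_on_degenerate_planes {E : Type*} [NormedAddCommGroup E]
    [InnerProductSpace ℝ E] [FiniteDimensional ℝ E]
    (g : (ℝ × E) → (ℝ × E) → ℝ)
    (hg : ∀ u v : ℝ × E, g u v = -(u.1 * v.1) + ⟪u.2, v.2⟫)
    (F : (ℝ × E) →ₗ[ℝ] (ℝ × E) →ₗ[ℝ] (ℝ × E) →ₗ[ℝ] (ℝ × E) →ₗ[ℝ] ℝ)
    (halt : ∀ x y z w, F y x z w = -F x y z w)
    (hpair : ∀ x y z w, F z w x y = F x y z w)
    (hbianchi : ∀ x y z w, F x y z w + F x z w y + F x w y z = 0)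
    (hdeg : ∀ x y : ℝ × E, g x x * g y y - (g x y) ^ 2 = 0 → F x y y x = 0) :
    ∃ k : ℝ, ∀ x y z w : ℝ × E,
      F x y z w = k * (g x z * g y w - g y z * g x w) := by
  classical
  set u : ℝ × E := (1, 0) with hu
  set ι : E →ₗ[ℝ] ℝ × E := LinearMap.inr ℝ ℝ E with hι
  have hιap : ∀ v : E, ι v = ((0 : ℝ), v) := fun v => rfl
  have hgadd2 : ∀ a b c : ℝ × E, g a (b + c) = g a b + g a c := by
    intro a b c
    simp only [hg, Prod.fst_add, Prod.snd_add, inner_add_right]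
    ring
  have hlast : ∀ x y z w : ℝ × E, F x y w z = -F x y z w := by
    intro x y z w
    rw [hpair w z x y, halt, hpair]
  have z1 : ∀ p q r : ℝ × E, F p p q r = 0 := by
    intro p q r; have := halt p p q r; linarith
  have z2 : ∀ p q r : ℝ × E, F p q r r = 0 := by
    intro p q r; have := hlast p q r r; linarith
  -- key fact
  have K : ∀ n p q : ℝ × E, g n n = 0 → g n p = 0 → g n q = 0 → F n p q n = 0 := by
    intro n p q hnn hnp hnq
    have h1 : F n p p n = 0 := hdeg n p (by rw [hnn, hnp]; ring)
    have h2 : F n q q n = 0 := hdeg n q (by rw [hnn, hnq]; ring)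
    have h3 : F n (p + q) (p + q) n = 0 :=
      hdeg n (p + q) (by rw [hnn, hgadd2 n p q, hnp, hnq]; ring)
    have hsym : F n q p n = F n p q n := by
      rw [hpair p n n q, halt n p n q, hlast n p q n, neg_neg]
    simp only [map_add, LinearMap.add_apply] at h3
    rw [h1, h2, hsym] at h3
    linarith
  -- the two fundamental relations coming from null planes
  have rel : ∀ e a b : E, ⟪e, a⟫ = 0 → ⟪e, b⟫ = 0 →
      F (ι e) (ι a) (ι b) (ι e) + ⟪e, e⟫ * F u (ι a) (ι b) u = 0 ∧
      ‖e‖ * (F u (ι a) (ι b) (ι e) + F (ι e) (ι a) (ι b) u) = 0 := by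
    intro e a b hea heb
    have hno : (⟪e, e⟫ : ℝ) = ‖e‖ * ‖e‖ := real_inner_self_eq_norm_mul_norm e
    have hd1 : ((‖e‖, e) : ℝ × E) = ‖e‖ • u + ι e := by
      ext <;> simp [hu, hιap]
    have hd2 : ((‖e‖, -e) : ℝ × E) = ‖e‖ • u - ι e := by
      ext <;> simp [hu, hιap]
    have h1 : F ((‖e‖, e) : ℝ × E) (ι a) (ι b) ((‖e‖, e) : ℝ × E) = 0 := by
      apply K
      · rw [hg]; simp [hno]; ring
      · rw [hg]; simp [hιap, hea]
      · rw [hg]; simp [hιap, heb]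
    have h2 : F ((‖e‖, -e) : ℝ × E) (ι a) (ι b) ((‖e‖, -e) : ℝ × E) = 0 := by
      apply K
      · rw [hg]; simp [hno]; ring
      · rw [hg]; simp [hιap, hea]
      · rw [hg]; simp [hιap, heb]
    rw [hd1] at h1
    have hFs : ∀ x y a b c : ℝ × E, F (x - y) a b c = F x a b c - F y a b c := fun x y a b c => by
      rw [sub_eq_add_neg, map_add, ← neg_one_smul ℝ y, map_smul]
      simp only [LinearMap.add_apply, LinearMap.smul_apply, smul_eq_mul]
      ring
    rw [hd2, hFs] at h2
    simp only [map_add, map_sub, map_smul, LinearMap.add_apply, LinearMap.sub_apply,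
      LinearMap.smul_apply, smul_eq_mul] at h1 h2
    constructor
    · linear_combination h1 / 2 + h2 / 2 + F u (ι a) (ι b) u * hno
    · linear_combination h1 / 2 - h2 / 2
  -- relation R for the mixed components
  have R : ∀ e a b : E, ⟪e, a⟫ = 0 → ⟪e, b⟫ = 0 →
      F u (ι a) (ι b) (ι e) = F u (ι b) (ι e) (ι a) := by
    intro e a b hea heb
    by_cases he : e = 0
    · subst he
      simp only [map_zero, LinearMap.zero_apply]
    · have h := (rel e a b hea heb).2
      have hne : ‖e‖ ≠ 0 := norm_ne_zero_iff.2 he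
      have h' : F u (ι a) (ι b) (ι e) + F (ι e) (ι a) (ι b) u = 0 := by
        rcases mul_eq_zero.1 h with h0 | h0
        · exact absurd h0 hne
        · exact h0
      have h'' : F (ι e) (ι a) (ι b) u = -F u (ι b) (ι e) (ι a) := by
        rw [hpair (ι b) u (ι e) (ι a), halt u (ι b) (ι e) (ι a)]
      linarith
  -- the purely mixed components vanish
  have hC : ∀ a b c : E, F u (ι a) (ι b) (ι c) = 0 := by
    have hxe : ∀ x e : E, ⟪e, x⟫ = 0 → F u (ι x) (ι x) (ι e) = 0 ∧ F u (ι x) (ι e) (ι x) = 0 := by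
      intro x e hex
      have h1 : F u (ι x) (ι x) (ι e) = F u (ι x) (ι e) (ι x) := R e x x hex hex
      have h2 := hbianchi u (ι x) (ι x) (ι e)
      have h3 : F u (ι e) (ι x) (ι x) = 0 := z2 u (ι e) (ι x)
      constructor <;> linarith
    have key : ∀ x y z : E, ⟪x, y⟫ = 0 → ⟪y, z⟫ = 0 → ⟪x, z⟫ = 0 →
        F u (ι x) (ι y) (ι z) = 0 := by
      intro x y z hxy hyz hxz
      have r1 : F u (ι x) (ι y) (ι z) = F u (ι y) (ι z) (ι x) := by
        refine R z x y ?_ ?_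
        · rw [real_inner_comm]; exact hxz
        · rw [real_inner_comm]; exact hyz
      have r2 : F u (ι y) (ι z) (ι x) = F u (ι z) (ι x) (ι y) := R x y z hxy hxz
      have hb := hbianchi u (ι x) (ι y) (ι z)
      linarith
    set bE := stdOrthonormalBasis ℝ E with hbE
    have hon := bE.orthonormal
    have hCb : ∀ i j l, F u (ι (bE i)) (ι (bE j)) (ι (bE l)) = 0 := by
      intro i j l
      by_cases hjl : j = l
      · subst hjl; exact z2 u (ι (bE i)) (ι (bE j))
      · have hjl' : ⟪bE j, bE l⟫ = 0 := hon.2 hjl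
        by_cases hij : i = j
        · subst hij
          exact (hxe (bE i) (bE l) (by rw [real_inner_comm]; exact hjl')).1
        · have hij' : ⟪bE i, bE j⟫ = 0 := hon.2 hij
          by_cases hil : i = l
          · subst hil
            exact (hxe (bE i) (bE j) (by rw [real_inner_comm]; exact hij')).2
          · exact key _ _ _ hij' hjl' (hon.2 hil)
    intro a b c
    rw [← bE.sum_repr a, ← bE.sum_repr b, ← bE.sum_repr c]
    simp only [map_sum, map_smul, LinearMap.sum_apply, LinearMap.smul_apply, smul_eq_mul]
    simp [hCb]
  -- symmetry of B
  have Bsym : ∀ a b : E, F u (ι b) (ι a) u = F u (ι a) (ι b) u := by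
    intro a b
    rw [hpair (ι a) u u (ι b), halt u (ι a) u (ι b), hlast u (ι a) (ι b) u, neg_neg]
  have alpha : ∀ x e : E, ⟪e, x⟫ = 0 →
      F u (ι x) (ι x) u * ⟪e, e⟫ = F u (ι e) (ι e) u * ⟪x, x⟫ := by
    intro x e hex
    have h1 := (rel e x x hex hex).1
    have h2 := (rel x e e (by rw [real_inner_comm]; exact hex)
      (by rw [real_inner_comm]; exact hex)).1
    have h3 : F (ι e) (ι x) (ι x) (ι e) = F (ι x) (ι e) (ι e) (ι x) :=
      hpair (ι x) (ι e) (ι e) (ι x)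
    linarith
  obtain ⟨k, hB, hS⟩ : ∃ k : ℝ, (∀ a b : E, F u (ι a) (ι b) u = k * ⟪a, b⟫) ∧
      (∀ a b c d : E, F (ι a) (ι b) (ι c) (ι d)
        = k * (⟪a, c⟫ * ⟪b, d⟫ - ⟪b, c⟫ * ⟪a, d⟫)) := by
    rcases subsingleton_or_nontrivial E with hE | hE
    · refine ⟨0, ?_, ?_⟩
      · intro a b
        obtain rfl : a = 0 := Subsingleton.elim a 0
        simp
      · intro a b c d
        obtain rfl : a = 0 := Subsingleton.elim a 0
        simp
    · obtain ⟨e₀, he₀⟩ : ∃ e : E, ⟪e, e⟫ = (1 : ℝ) := by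
        obtain ⟨v, hv⟩ := exists_ne (0 : E)
        have hvn : ‖v‖ ≠ 0 := norm_ne_zero_iff.2 hv
        refine ⟨‖v‖⁻¹ • v, ?_⟩
        rw [real_inner_smul_left, real_inner_smul_right,
          real_inner_self_eq_norm_mul_norm]
        field_simp
      set k := F u (ι e₀) (ι e₀) u with hk
      -- B vanishes on orthogonal pairs
      have horth : ∀ a b : E, ⟪a, b⟫ = 0 → F u (ι a) (ι b) u = 0 := by
        intro a b hab
        by_cases ha : a = 0
        · subst ha; simp
        by_cases hb : b = 0
        · subst hb; simp
        have han : ‖a‖ ≠ 0 := norm_ne_zero_iff.2 ha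
        have hbn : ‖b‖ ≠ 0 := norm_ne_zero_iff.2 hb
        set a' : E := ‖b‖ • a with ha'
        set b' : E := ‖a‖ • b with hb'
        have hab' : ⟪a', b'⟫ = 0 := by
          rw [ha', hb', real_inner_smul_left, real_inner_smul_right, hab]; ring
        have hba' : ⟪b', a'⟫ = 0 := by rw [real_inner_comm]; exact hab'
        have haa' : ⟪a', a'⟫ = ‖a‖ * ‖a‖ * (‖b‖ * ‖b‖) := by
          rw [ha', real_inner_smul_left, real_inner_smul_right,
            real_inner_self_eq_norm_mul_norm]; ring
        have hbb' : ⟪b', b'⟫ = ‖a‖ * ‖a‖ * (‖b‖ * ‖b‖) := by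
          rw [hb', real_inner_smul_left, real_inner_smul_right,
            real_inner_self_eq_norm_mul_norm]; ring
        have hip : ⟪a' - b', a' + b'⟫ = 0 := by
          rw [inner_sub_left, inner_add_right, inner_add_right, haa', hbb', hab', hba']
          ring
        have hα := alpha (a' + b') (a' - b') hip
        have hil : ⟪a' - b', a' - b'⟫ = 2 * (‖a‖ * ‖a‖ * (‖b‖ * ‖b‖)) := by
          rw [inner_sub_left, inner_sub_right, inner_sub_right, haa', hbb', hab', hba']
          ring
        have hir : ⟪a' + b', a' + b'⟫ = 2 * (‖a‖ * ‖a‖ * (‖b‖ * ‖b‖)) := by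
          rw [inner_add_left, inner_add_right, inner_add_right, haa', hbb', hab', hba']
          ring
        rw [hil, hir] at hα
        simp only [map_add, map_sub, LinearMap.add_apply, LinearMap.sub_apply] at hα
        have hm : (2 : ℝ) * (‖a‖ * ‖a‖ * (‖b‖ * ‖b‖)) ≠ 0 := by
          positivity
        have hcanc : F u (ι a') (ι b') u + F u (ι b') (ι a') u = 0 := by
          have := mul_right_cancel₀ hm hα
          linarith
        have : F u (ι a') (ι b') u = 0 := by
          have hs := Bsym a' b'
          linarith
        rw [ha', hb'] at this
        simp only [map_smul, LinearMap.smul_apply, smul_eq_mul] at this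
        rcases mul_eq_zero.1 this with h0 | h0
        · exact absurd h0 han
        rcases mul_eq_zero.1 h0 with h1 | h1
        · exact absurd h1 hbn
        exact h1
      -- B on the diagonal
      have hBxx : ∀ x : E, F u (ι x) (ι x) u = k * ⟪x, x⟫ := by
        intro x
        set c : ℝ := ⟪e₀, x⟫ with hc
        set y : E := x - c • e₀ with hy
        have hey : ⟪e₀, y⟫ = 0 := by
          rw [hy, inner_sub_right, real_inner_smul_right, he₀, hc]; ring
        have hxdec : x = c • e₀ + y := by rw [hy]; abel
        have hyy : F u (ι y) (ι y) u = k * ⟪y, y⟫ := by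
          have := alpha y e₀ hey
          rw [he₀] at this
          rw [← hk] at this
          linarith
        have hBey : F u (ι e₀) (ι y) u = 0 := horth e₀ y hey
        have hBye : F u (ι y) (ι e₀) u = 0 := by rw [Bsym]; exact hBey
        have hix : ⟪x, x⟫ = c * c + ⟪y, y⟫ := by
          rw [hxdec, inner_add_left, inner_add_right, inner_add_right,
            real_inner_smul_left, real_inner_smul_left, real_inner_smul_right,
            real_inner_smul_right, he₀, hey, real_inner_comm e₀ y, hey]
          ring
        conv_lhs => rw [hxdec]
        simp only [map_add, map_smul, LinearMap.add_apply, LinearMap.smul_apply, smul_eq_mul]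
        rw [hix, hyy, hBey, hBye, ← hk]
        ring
      have hB : ∀ a b : E, F u (ι a) (ι b) u = k * ⟪a, b⟫ := by
        intro a b
        have h := hBxx (a + b)
        simp only [map_add, LinearMap.add_apply, inner_add_left, inner_add_right] at h
        rw [hBxx a, hBxx b, Bsym a b] at h
        linear_combination h / 2 - k / 2 * real_inner_comm b a
      refine ⟨k, hB, ?_⟩
      -- sectional values on spacelike planes
      have sec : ∀ e x : E, ⟪e, x⟫ = 0 →
          F (ι e) (ι x) (ι x) (ι e) = -(k * (⟪e, e⟫ * ⟪x, x⟫)) := by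
        intro e x hex
        have h := (rel e x x hex hex).1
        rw [hB] at h
        linarith
      -- the spacelike tensor minus k * G vanishes
      have hTE := lemA' (fun a b c d : E =>
          F (ι a) (ι b) (ι c) (ι d) - k * (⟪a, c⟫ * ⟪b, d⟫ - ⟪b, c⟫ * ⟪a, d⟫))
        ?_ ?_ ?_ ?_ ?_ ?_
      · intro a b c d
        have h := hTE a b c d
        try simp only at h
        linarith
      · intro a a' b c d
        simp only [map_add, LinearMap.add_apply, inner_add_left]
        ring
      · intro a b b' c d
        simp only [map_add, LinearMap.add_apply, inner_add_left, inner_add_right]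
        ring
      · intro x y z w
        try simp only
        rw [halt (ι x) (ι y) (ι z) (ι w)]
        ring
      · intro x y z w
        try simp only
        rw [hpair (ι x) (ι y) (ι z) (ι w), real_inner_comm z x, real_inner_comm w x,
          real_inner_comm w y, real_inner_comm z y]
        ring
      · intro x y z w
        try simp only
        have hb := hbianchi (ι x) (ι y) (ι z) (ι w)
        linear_combination hb - k * ⟪x, z⟫ * real_inner_comm w y +
          k * ⟪x, w⟫ * real_inner_comm z y + k * ⟪x, y⟫ * real_inner_comm w z
      · intro a b
        try simp only
        by_cases ha : a = 0
        · subst ha; simp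
        have haa : ⟪a, a⟫ ≠ 0 := by
          rw [real_inner_self_eq_norm_mul_norm]
          have := norm_ne_zero_iff.2 ha
          positivity
        set c : ℝ := ⟪a, b⟫ / ⟪a, a⟫ with hc
        set b' : E := b - c • a with hb'
        have hab' : ⟪a, b'⟫ = 0 := by
          rw [hb', inner_sub_right, real_inner_smul_right, hc]
          field_simp; ring
        have hbdec : b = b' + c • a := by rw [hb']; abel
        have hF : F (ι a) (ι b) (ι b) (ι a) = -(k * (⟪a, a⟫ * ⟪b', b'⟫)) := by
          conv_lhs => rw [hbdec]
          simp only [map_add, map_smul, LinearMap.add_apply, LinearMap.smul_apply,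
            smul_eq_mul]
          rw [z2 (ι a) (ι b') (ι a), z1 (ι a) (ι b') (ι a), z1 (ι a) (ι a) (ι a),
            sec a b' hab']
          ring
        have hab2 : ⟪a, b⟫ = c * ⟪a, a⟫ := by
          rw [hc]; field_simp
        have hbb2 : ⟪b, b⟫ = ⟪b', b'⟫ + c * c * ⟪a, a⟫ := by
          rw [hbdec, inner_add_left, inner_add_right, inner_add_right,
            real_inner_smul_left, real_inner_smul_left, real_inner_smul_right,
            real_inner_smul_right, real_inner_comm a b', hab']
          ring
        linear_combination hF + k * c * ⟪a, a⟫ * real_inner_comm b a -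
          k * (⟪b, a⟫ + c * ⟪a, a⟫) * hab2 + k * ⟪a, a⟫ * hbb2
  -- pattern lemmas
  have hP2 : ∀ a b c : E, F (ι a) u (ι b) (ι c) = 0 := by
    intro a b c; rw [halt u (ι a) (ι b) (ι c), hC]; ring
  have hP3 : ∀ a b c : E, F (ι a) (ι b) u (ι c) = 0 := by
    intro a b c; rw [hpair u (ι c) (ι a) (ι b), hC]
  have hP4 : ∀ a b c : E, F (ι a) (ι b) (ι c) u = 0 := by
    intro a b c; rw [hpair (ι c) u (ι a) (ι b), hP2]
  have h13 : ∀ a b : E, F u (ι a) u (ι b) = -(k * ⟪a, b⟫) := by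
    intro a b; rw [hlast u (ι a) (ι b) u, hB]
  have h23 : ∀ a b : E, F (ι a) u u (ι b) = k * ⟪a, b⟫ := by
    intro a b; rw [halt u (ι a) u (ι b), h13, neg_neg]
  have h24 : ∀ a b : E, F (ι a) u (ι b) u = -(k * ⟪a, b⟫) := by
    intro a b; rw [halt u (ι a) (ι b) u, hB]
  refine ⟨k, fun x y z w => ?_⟩
  have hsplit : ∀ v : ℝ × E, v = v.1 • u + ι v.2 := by
    intro v; ext <;> simp [hu, hιap]
  rw [hg x z, hg y w, hg y z, hg x w]
  conv_lhs => rw [hsplit x, hsplit y, hsplit z, hsplit w]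
  simp only [map_add, map_smul, LinearMap.add_apply, LinearMap.smul_apply, smul_eq_mul]
  simp only [z1, z2, hC, hP2, hP3, hP4, h13, hB, h23, h24, hS]
  ring
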